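/- (Equation 'maurercartanvariation') Let γ : ℝ × E → 𝔄 be continuous and differentiable in the E-variable, and let g : ℝ × E → 𝔄 be twice continuously differentiable with g(t,x) invertible for all (t,x) and ∂_t g(t,x) = g(t,x)·γ(t,x). Then the pulled-back Maurer–Cartan form φ_t(x)v := g(t,x)⁻¹·(D_x g(t,·))(x)v satisfies, for every (t,x) and v ∈ E, that t ↦ φ_t(x)v is differentiable with ∂_t(φ_t(x)v) = (D_x γ(t,·))(x)v + [φ_t(x)v, γ(t,x)]; that is, (d/dt) φ_t = d_{φ_t} γ_t. -/

import Mathlib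

/-- The pulled-back Maurer–Cartan form `φ_t(x)v := g(t,x)⁻¹ · (D_x g_t)(x)v` of a
time-dependent group-valued map `g : ℝ × E → 𝔄`. -/
noncomputable def maurerCartan {𝔄 E : Type*} [NormedRing 𝔄] [NormedAlgebra ℝ 𝔄]
    [NormedAddCommGroup E] [NormedSpace ℝ E]
    (g : ℝ × E → 𝔄) (t : ℝ) (x : E) (v : E) : 𝔄 :=
  Ring.inverse (g (t, x)) * (fderiv ℝ (fun y => g (t, y)) x v)

/-- Derivative of the pointwise `Ring.inverse` of a differentiable unit-valued path,
without any completeness assumption on the algebra. -/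
lemma hasDerivAt_ringInverse_comp {𝔄 : Type*} [NormedRing 𝔄] [NormedAlgebra ℝ 𝔄]
    {c : ℝ → 𝔄} {c' : 𝔄} {t : ℝ} (hc : HasDerivAt c c' t) (hu : ∀ s, IsUnit (c s)) :
    HasDerivAt (fun s => Ring.inverse (c s))
      (-(Ring.inverse (c t) * c' * Ring.inverse (c t))) t := by
  set i : ℝ → 𝔄 := fun s => Ring.inverse (c s) with hi
  have hkey : ∀ s, i s - i t = -(i s * (c s - c t) * i t) := by
    intro s
    have h1 : i s * c s = 1 := Ring.inverse_mul_cancel _ (hu s)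
    have h2 : c t * i t = 1 := Ring.mul_inverse_cancel _ (hu t)
    have : i s * (c s - c t) * i t = i t - i s := by
      rw [mul_sub, sub_mul, h1, one_mul, mul_assoc, h2, mul_one]
    rw [this]; abel
  -- continuity of `i` at `t`
  have hcc : ContinuousAt c t := hc.continuousAt
  set M := ‖i t‖ with hM
  have hM0 : 0 ≤ M := norm_nonneg _
  have hbound : ∀ᶠ s in nhds t, ‖i s‖ ≤ 2 * M + 1 := by
    have hsmall : ∀ᶠ s in nhds t, ‖c s - c t‖ < 1 / (2 * (M + 1)) := by
      have h : ContinuousAt (fun s => ‖c s - c t‖) t := (hcc.sub continuousAt_const).norm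
      have hT : Filter.Tendsto (fun s => ‖c s - c t‖) (nhds t) (nhds 0) := by
        simpa [ContinuousAt] using h
      exact hT.eventually_lt_const (by positivity)
    filter_upwards [hsmall] with s hs
    have hnormkey : ‖i s‖ ≤ M + ‖i s‖ * ‖c s - c t‖ * M := by
      have : i s = i t - i s * (c s - c t) * i t := by
        have h := hkey s
        rw [sub_eq_iff_eq_add, neg_add_eq_sub] at h
        exact h
      calc ‖i s‖ = ‖i t - i s * (c s - c t) * i t‖ := by rw [← this]
        _ ≤ ‖i t‖ + ‖i s * (c s - c t) * i t‖ := norm_sub_le _ _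
        _ ≤ M + ‖i s‖ * ‖c s - c t‖ * M := by
            gcongr
            calc ‖i s * (c s - c t) * i t‖ ≤ ‖i s * (c s - c t)‖ * ‖i t‖ := norm_mul_le _ _
              _ ≤ ‖i s‖ * ‖c s - c t‖ * ‖i t‖ := by gcongr; exact norm_mul_le _ _
    have h1 : ‖c s - c t‖ * M ≤ 1 / 2 := by
      have h2 : ‖c s - c t‖ ≤ 1 / (2 * (M + 1)) := le_of_lt hs
      have h3 : (0:ℝ) < 2 * (M + 1) := by positivity
      rw [le_div_iff₀ h3] at h2
      nlinarith [norm_nonneg (c s - c t)]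
    nlinarith [norm_nonneg (i s), norm_nonneg (c s - c t)]
  have hicont : Filter.Tendsto i (nhds t) (nhds (i t)) := by
    have hdiff : Filter.Tendsto (fun s => i s - i t) (nhds t) (nhds 0) := by
      rw [tendsto_zero_iff_norm_tendsto_zero]
      apply squeeze_zero' (Filter.Eventually.of_forall fun s => norm_nonneg _)
      · filter_upwards [hbound] with s hs
        show ‖i s - i t‖ ≤ (2 * M + 1) * M * ‖c s - c t‖
        rw [hkey s, norm_neg]
        calc ‖i s * (c s - c t) * i t‖ ≤ ‖i s‖ * ‖c s - c t‖ * ‖i t‖ := by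
              refine (norm_mul_le _ _).trans ?_
              gcongr; exact norm_mul_le _ _
          _ ≤ (2 * M + 1) * ‖c s - c t‖ * M := by gcongr
          _ = (2 * M + 1) * M * ‖c s - c t‖ := by ring
      · have h : ContinuousAt (fun s => ‖c s - c t‖) t := (hcc.sub continuousAt_const).norm
        have hT : Filter.Tendsto (fun s => ‖c s - c t‖) (nhds t) (nhds 0) := by
          simpa [ContinuousAt] using h
        simpa using hT.const_mul ((2 * M + 1) * M)
    have := hdiff.add_const (i t)
    simpa using this
  -- derivative via slope
  rw [hasDerivAt_iff_tendsto_slope]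
  have hslopec : Filter.Tendsto (slope c t) (nhdsWithin t {t}ᶜ) (nhds c') :=
    hasDerivAt_iff_tendsto_slope.1 hc
  have hlim : Filter.Tendsto (fun s => -(i s * slope c t s * i t)) (nhdsWithin t {t}ᶜ)
      (nhds (-(i t * c' * i t))) :=
    (((hicont.mono_left nhdsWithin_le_nhds).mul hslopec).mul tendsto_const_nhds).neg
  apply hlim.congr'
  filter_upwards [self_mem_nhdsWithin] with s hs
  have hst : s - t ≠ 0 := sub_ne_zero.2 hs
  rw [slope_def_module, slope_def_module, hkey s, smul_neg, neg_inj,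
    mul_smul_comm, smul_mul_assoc]

/-- **Equation `maurercartanvariation`.**  Let `γ : ℝ × E → 𝔄` be continuous and
differentiable in the `E`-variable, and let `g : ℝ × E → 𝔄` be `C²` with invertible
values and `∂ₜ g = g·γ` (i.e. `g_t = Pexp(∫₀ᵗ γ_s ds)·g₀`).  Then the pulled-back
Maurer–Cartan form `φ_t(x)v := g(t,x)⁻¹ (D_x g_t)(x)v` satisfies
`∂ₜ (φ_t(x)v) = (D_x γ_t)(x)v + [φ_t(x)v, γ(t,x)]`, i.e. `(d/dt) φ_t = d_{φ_t} γ_t`. -/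
theorem stmt10
    {𝔄 : Type*} [NormedRing 𝔄] [NormedAlgebra ℝ 𝔄]
    {E : Type*} [NormedAddCommGroup E] [NormedSpace ℝ E]
    (γ g : ℝ × E → 𝔄)
    (hγcont : Continuous γ)
    (hγdiff : ∀ t : ℝ, Differentiable ℝ (fun x : E => γ (t, x)))
    (hg : ContDiff ℝ 2 g)
    (hgunit : ∀ p : ℝ × E, IsUnit (g p))
    (hgflow : ∀ (t : ℝ) (x : E), HasDerivAt (fun s => g (s, x)) (g (t, x) * γ (t, x)) t)
    (t : ℝ) (x : E) (v : E) :
    HasDerivAt (fun s : ℝ => maurerCartan g s x v)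
      (fderiv ℝ (fun y => γ (t, y)) x v
        + (maurerCartan g t x v * γ (t, x) - γ (t, x) * maurerCartan g t x v))
      t := by
  set G := fderiv ℝ g with hGdef
  have hgdiff : Differentiable ℝ g := hg.differentiable (by norm_num)
  have hGc : ContDiff ℝ 1 G := hg.fderiv_right (by norm_num)
  have hGdiff : Differentiable ℝ G := hGc.differentiable (by norm_num)
  -- the curve `s ↦ (s, y)` and the embedding `z ↦ (s, z)`
  have hcurve : ∀ (s : ℝ) (y : E),
      HasDerivAt (fun s : ℝ => ((s, y) : ℝ × E)) ((1 : ℝ), (0 : E)) s := fun s y =>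
    (hasDerivAt_id s).prodMk (hasDerivAt_const s y)
  have hinr : ∀ (s : ℝ) (y : E), HasFDerivAt (fun z : E => ((s, z) : ℝ × E))
      (ContinuousLinearMap.inr ℝ ℝ E) y := fun s y =>
    (hasFDerivAt_const s y).prodMk (hasFDerivAt_id y)
  -- the space-slice derivative
  have hslice : ∀ (s : ℝ) (y : E), HasFDerivAt (fun z => g (s, z))
      ((G (s, y)).comp (ContinuousLinearMap.inr ℝ ℝ E)) y := fun s y =>
    ((hgdiff (s, y)).hasFDerivAt).comp y (hinr s y)
  have hφeq : ∀ s : ℝ, maurerCartan g s x v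
      = Ring.inverse (g (s, x)) * G (s, x) ((0 : ℝ), v) := by
    intro s
    unfold maurerCartan
    rw [(hslice s x).fderiv]
    rfl
  -- the time-slice derivative equals `G _ (1,0)`, hence equals `g·γ`
  have htime : ∀ (s : ℝ) (y : E), G (s, y) ((1 : ℝ), (0 : E)) = g (s, y) * γ (s, y) := by
    intro s y
    have h1 : HasDerivAt (fun u : ℝ => g (u, y)) (G (s, y) ((1 : ℝ), (0 : E))) s := by
      simpa [Function.comp_def] using ((hgdiff (s, y)).hasFDerivAt).comp_hasDerivAt s (hcurve s y)
    exact h1.unique (hgflow s y)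
  -- derivative of `s ↦ G (s, x) (0, v)`
  have hW0 : HasDerivAt (fun s : ℝ => G (s, x) ((0 : ℝ), v))
      (fderiv ℝ G (t, x) ((1 : ℝ), (0 : E)) ((0 : ℝ), v)) t := by
    have h1 : HasDerivAt (fun s : ℝ => G (s, x)) (fderiv ℝ G (t, x) ((1 : ℝ), (0 : E))) t := by
      simpa [Function.comp_def] using ((hGdiff (t, x)).hasFDerivAt).comp_hasDerivAt t (hcurve t x)
    simpa using h1.clm_apply (hasDerivAt_const t ((0 : ℝ), v))
  -- symmetry of the second derivative (Clairaut)
  have hsymm : fderiv ℝ G (t, x) ((1 : ℝ), (0 : E)) ((0 : ℝ), v)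
      = fderiv ℝ G (t, x) ((0 : ℝ), v) ((1 : ℝ), (0 : E)) :=
    second_derivative_symmetric (fun y => (hgdiff y).hasFDerivAt)
      ((hGdiff (t, x)).hasFDerivAt) _ _
  -- the mixed partial: differentiate `y ↦ G (t, y) (1, 0) = g·γ` in space
  have hmix : fderiv ℝ G (t, x) ((0 : ℝ), v) ((1 : ℝ), (0 : E))
      = g (t, x) * fderiv ℝ (fun y => γ (t, y)) x v
        + G (t, x) ((0 : ℝ), v) * γ (t, x) := by
    have h2 : HasFDerivAt (fun y : E => G (t, y))
        ((fderiv ℝ G (t, x)).comp (ContinuousLinearMap.inr ℝ ℝ E)) x :=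
      ((hGdiff (t, x)).hasFDerivAt).comp x (hinr t x)
    have h3 : HasFDerivAt (fun y : E => G (t, y) ((1 : ℝ), (0 : E)))
        (((fun y : E => G (t, y)) x).comp (0 : E →L[ℝ] ℝ × E)
          + ((fderiv ℝ G (t, x)).comp (ContinuousLinearMap.inr ℝ ℝ E)).flip
              ((1 : ℝ), (0 : E))) x :=
      h2.clm_apply (hasFDerivAt_const _ x)
    have h4 : HasFDerivAt (fun y : E => g (t, y) * γ (t, y))
        (g (t, x) • fderiv ℝ (fun y => γ (t, y)) x
          + ((G (t, x)).comp (ContinuousLinearMap.inr ℝ ℝ E)).smulRight (γ (t, x))) x :=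
      (hslice t x).mul' ((hγdiff t) x).hasFDerivAt
    have hfeq : (fun y : E => G (t, y) ((1 : ℝ), (0 : E)))
        = fun y : E => g (t, y) * γ (t, y) := funext fun y => htime t y
    rw [hfeq] at h3
    have h5 := h4.unique h3
    have h6 := congrArg (fun (L : E →L[ℝ] 𝔄) => L v) h5
    simpa [smul_eq_mul] using h6.symm
  have hW : HasDerivAt (fun s : ℝ => G (s, x) ((0 : ℝ), v))
      (g (t, x) * fderiv ℝ (fun y => γ (t, y)) x v
        + G (t, x) ((0 : ℝ), v) * γ (t, x)) t := by
    rw [← hmix, ← hsymm]; exact hW0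
  -- derivative of the inverse
  have hinv : HasDerivAt (fun s : ℝ => Ring.inverse (g (s, x)))
      (-(Ring.inverse (g (t, x)) * (g (t, x) * γ (t, x)) * Ring.inverse (g (t, x)))) t :=
    hasDerivAt_ringInverse_comp (hgflow t x) (fun s => hgunit (s, x))
  -- combine
  have hmain : HasDerivAt (fun s => Ring.inverse (g (s, x)) * G (s, x) ((0 : ℝ), v)) _ t :=
    hinv.mul hW
  have hfun : (fun s : ℝ => maurerCartan g s x v)
      = fun s : ℝ => Ring.inverse (g (s, x)) * G (s, x) ((0 : ℝ), v) := funext hφeq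
  rw [hfun, hφeq t]
  convert hmain using 1
  have hia : Ring.inverse (g (t, x)) * g (t, x) = 1 :=
    Ring.inverse_mul_cancel _ (hgunit (t, x))
  set i := Ring.inverse (g (t, x))
  set a := g (t, x)
  set b := γ (t, x)
  set w := G (t, x) ((0 : ℝ), v)
  set d := fderiv ℝ (fun y => γ (t, y)) x v
  have : -(i * (a * b) * i) = -(b * i) := by
    rw [← mul_assoc, hia, one_mul]
  rw [this]
  rw [mul_add, ← mul_assoc i a d, hia, one_mul]
  noncomm_ring
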